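/- Let G be a finite connected bipartite simple graph and let P = (v_0, …, v_k) be a geodesic path in G. In the game of Surrounding Cops and Robbers on G, two cops have a strategy such that, against every robber play, after a finite number of moves the robber never again occupies a vertex of P. -/

import Mathlib

/-!
Formalization of the game of Surrounding Cops and Robbers, played on a simple
graph `G` by a cop player controlling `m` cops and a robber player controlling
one robber, with perfect information.  The cops are placed first, then the
robber is placed on a vertex not occupied by a cop; thereafter players
alternate turns (cops first), each pawn moving along an edge or staying put,
and the robber may never end his turn on a vertex occupied by a cop.  The cop
player wins if at some point every neighbor of the robber's vertex is occupied
by a cop.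
-/

/-- One step of a cop or of the robber: stay in place or move along an edge. -/
def stepRel {V : Type*} (G : SimpleGraph V) (x y : V) : Prop := x = y ∨ G.Adj x y

/-- `histList r t = [r 0, r 1, …, r (t-1)]`: the robber's first `t` positions. -/
def histList {V : Type*} (r : ℕ → V) (t : ℕ) : List V := (List.range t).map r

/-- A cop strategy for `m` cops is a function `F` assigning to each finite history of
robber positions the current positions of the cops; `F []` is the initial placement,
made before the robber is placed, and `F (h ++ [x])` is the cops' answer after the
robber history `h` has been extended by the robber move `x`.  The strategy is valid
if each cop always moves along an edge or stays put. -/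
def ValidCopStrategy {V : Type*} (G : SimpleGraph V) {m : ℕ}
    (F : List V → Fin m → V) : Prop :=
  ∀ (h : List V) (x : V) (i : Fin m), stepRel G (F h i) (F (h ++ [x]) i)

/-- An infinite robber play `r` against the cop strategy `F` is legal if the robber
always moves along an edge or stays put, and never ends a turn on a vertex occupied
by a cop (`r 0` is the robber's initial placement, chosen after the cops have been
placed at `F []`, and `r t` is chosen when the cops stand at `F (histList r t)`). -/
def LegalPlay {V : Type*} (G : SimpleGraph V) {m : ℕ}
    (F : List V → Fin m → V) (r : ℕ → V) : Prop :=
  (∀ t, stepRel G (r t) (r (t + 1))) ∧ ∀ t, ∀ i, F (histList r t) i ≠ r t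

/-- The robber is surrounded at time `t`: after the cops' move in round `t + 1`,
every neighbor of the robber's position `r t` is occupied by a cop. -/
def SurroundedAt {V : Type*} (G : SimpleGraph V) {m : ℕ}
    (F : List V → Fin m → V) (r : ℕ → V) (t : ℕ) : Prop :=
  ∀ w, G.Adj (r t) w → ∃ i, F (histList r (t + 1)) i = w

/-- `m` cops have a winning strategy in the game of Surrounding Cops and Robbers
on `G`; equivalently, the surrounding cop number satisfies `s(G) ≤ m`. -/
def CopsWin {V : Type*} (G : SimpleGraph V) (m : ℕ) : Prop :=
  ∃ F : List V → Fin m → V, ValidCopStrategy G F ∧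
    ∀ r : ℕ → V, LegalPlay G F r → ∃ t, SurroundedAt G F r t


namespace SCRgeo

def toward (x y : ℕ) : ℕ := if x < y then x + 1 else if y < x then x - 1 else x

lemma toward_dist_self (x y : ℕ) : Nat.dist (toward x y) x ≤ 1 := by
  unfold toward; split_ifs <;> simp [Nat.dist] <;> omega

lemma toward_close {x y : ℕ} (h : Nat.dist x y ≤ 1) : toward x y = y := by
  unfold toward; unfold Nat.dist at h; split_ifs <;> omega

lemma toward_le {x y k : ℕ} (hx : x ≤ k) (hy : y ≤ k) : toward x y ≤ k := by
  unfold toward; split_ifs <;> omega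



lemma no_strict_desc (f : ℕ → ℕ) (h : ∀ t, f (t + 1) < f t) : False := by
  have key : ∀ t, f t + t ≤ f 0 := by
    intro t
    induction t with
    | zero => omega
    | succ n ihn => have := h n; omega
  have := key (f 0 + 1); omega

lemma exists_stable_aux : ∀ (m : ℕ) (f : ℕ → ℕ), f 0 ≤ m → (∀ t, f (t + 1) ≤ f t) →
    ∃ N, ∀ t, N ≤ t → f t = f N := by
  intro m
  induction m with
  | zero =>
    intro f h0 hf
    have hall : ∀ t, f t = 0 := by
      intro t
      induction t with
      | zero => omega
      | succ n ihn => have := hf n; omega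
    exact ⟨0, fun t _ => by rw [hall t, hall 0]⟩
  | succ m ih =>
    intro m0 h0 hf
    by_cases h : ∃ t, m0 t < m0 0
    · obtain ⟨t0, ht0⟩ := h
      obtain ⟨N, hN⟩ := ih (fun n => m0 (t0 + n))
        (by show m0 (t0 + 0) ≤ m; rw [Nat.add_zero]; omega)
        (fun t => by show m0 (t0 + (t + 1)) ≤ m0 (t0 + t); rw [Nat.add_succ]; exact hf _)
      refine ⟨t0 + N, fun t ht => ?_⟩
      have h1 := hN (t - t0) (by omega)
      rwa [Nat.add_sub_cancel' (by omega : t0 ≤ t)] at h1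
    · push_neg at h
      have mono : ∀ n s, m0 (s + n) ≤ m0 s := by
        intro n
        induction n with
        | zero => intro s; simp
        | succ q ihq =>
          intro s
          have heq : s + (q + 1) = (s + q) + 1 := Nat.add_succ s q
          rw [heq]
          exact le_trans (hf (s + q)) (ihq s)
      refine ⟨0, fun t _ => ?_⟩
      have h1 := h t
      have h2 := mono t 0
      simp only [Nat.zero_add] at h2
      omega

lemma exists_stable (f : ℕ → ℕ) (hf : ∀ t, f (t + 1) ≤ f t) :
    ∃ N, ∀ t, N ≤ t → f t = f N :=
  exists_stable_aux (f 0) f le_rfl hf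

/-- a cop walking along the path towards a slowly moving target eventually
tracks the target exactly. -/
lemma reach_lock (k : ℕ) (a T : ℕ → ℕ)
    (ha : ∀ t, a (t + 1) = toward (a t) (T (t + 1)))
    (hT : ∀ t, Nat.dist (T (t + 1)) (T t) ≤ 1)
    (hTk : ∀ t, T t ≤ k) (hak : ∀ t, a t ≤ k) :
    ∃ N, ∀ t, N ≤ t → a t = T t := by
  have hpers : ∀ t, a t = T t → a (t + 1) = T (t + 1) := by
    intro t h
    rw [ha t, h]
    exact toward_close (by have := hT t; unfold Nat.dist at *; omega)
  suffices hex : ∃ N, a N = T N by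
    obtain ⟨N, hN⟩ := hex
    refine ⟨N, fun t ht => ?_⟩
    induction t, ht using Nat.le_induction with
    | base => exact hN
    | succ n hn ihn => exact hpers n ihn
  by_contra hno
  push_neg at hno
  set g : ℕ → ℕ := fun t => Nat.dist (a t) (T t) with hg
  set w : ℕ → ℕ := fun t => if a t ≤ T t then k - a t else a t with hw
  have hwk : ∀ t, w t ≤ k := by
    intro t; simp only [hw]; split_ifs
    · omega
    · exact hak t
  apply no_strict_desc (fun t => (k + 1) * g t + w t)
  intro t
  show (k + 1) * g (t + 1) + w (t + 1) < (k + 1) * g t + w t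
  have hne' : a (t + 1) ≠ T (t + 1) := hno (t + 1)
  have hLip := hT t
  have hstep := ha t
  have hd : Nat.dist (a (t + 1)) (T (t + 1)) = Nat.dist (a t) (T (t + 1)) - 1 := by
    rw [hstep]; unfold toward Nat.dist; split_ifs <;> omega
  have hG2 : 2 ≤ Nat.dist (a t) (T (t + 1)) := by
    have h5 : Nat.dist (a (t + 1)) (T (t + 1)) ≠ 0 := by unfold Nat.dist; omega
    omega
  have hle : g (t + 1) ≤ g t := by
    simp only [hg]
    unfold Nat.dist at hd hLip ⊢
    omega
  rcases Nat.lt_or_ge (g (t + 1)) (g t) with hlt | hge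
  · have h2 : (k + 1) * (g (t + 1)) + (k + 1) ≤ (k + 1) * g t := by
      calc (k + 1) * (g (t + 1)) + (k + 1) = (k + 1) * (g (t + 1) + 1) := by ring
      _ ≤ (k + 1) * g t := Nat.mul_le_mul_left _ (by omega)
    have h3 := hwk (t + 1)
    have h4 := hwk t
    omega
  · have hgeq : g (t + 1) = g t := le_antisymm hle hge
    have hwlt : w (t + 1) < w t := by
      have hdd : Nat.dist (a t) (T (t + 1)) = Nat.dist (a t) (T t) + 1 := by
        have h6 : g (t + 1) = Nat.dist (a (t + 1)) (T (t + 1)) := rfl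
        have h7 : g t = Nat.dist (a t) (T t) := rfl
        omega
      simp only [hw]
      rw [hstep]
      unfold toward
      unfold Nat.dist at hdd hLip hG2
      have hak' := hak t
      have hTk' := hTk (t + 1)
      have hTk0 := hTk t
      split_ifs <;> omega
    rw [hgeq]
    omega


inductive Mode | chase | push | semi
deriving DecidableEq

structure St where
  mode : Mode
  a : ℕ
  b : ℕ

section Machine

variable {V : Type*} (d : V → ℕ) (onP : V → Prop) [DecidablePred onP] (k : ℕ)

def step (s : St) (u : V) : St :=
  let d' := d u
  let al := min (d' - 1) k
  let be := min (d' + 1) k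
  match s.mode with
  | .chase =>
      if onP u ∧ Nat.dist s.a d' ≤ 1 ∧ Nat.dist s.b be ≤ 1 then
        ⟨.push, toward s.a d', toward s.b be⟩
      else ⟨.chase, toward s.a al, toward s.b be⟩
  | .push =>
      if onP u ∧ d' + 1 = s.a then ⟨.push, toward s.a d', toward s.b be⟩
      else if ¬ onP u ∧ d' + 1 = s.a then ⟨.semi, toward s.a d', toward s.b s.a⟩
      else ⟨.chase, toward s.a al, toward s.b be⟩
  | .semi =>
      if onP u ∧ d' + 1 = s.a then ⟨.push, toward s.a d', toward s.b be⟩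
      else if ¬ onP u ∧ (d' = s.a ∨ d' + 1 = s.a) then
        ⟨.semi, toward s.a d', toward s.b (d' + 1)⟩
      else ⟨.chase, toward s.a al, toward s.b be⟩

def Inv (s : St) (u : V) : Prop :=
  s.a ≤ k ∧ s.b ≤ k ∧
  match s.mode with
  | .chase => True
  | .push => onP u ∧ d u = s.a ∧ s.b = min (s.a + 1) k
  | .semi => ¬ onP u ∧ d u = s.a ∧ s.b = s.a + 1

def LockedOff (s : St) (u : V) : Prop :=
  ¬ onP u ∧ s.a = min (d u - 1) k ∧ s.b = min (d u + 1) k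

def Good (s : St) (u : V) : Prop :=
  Inv d onP k s u ∧ (s.mode = .chase → LockedOff d onP k s u)

def mu (s : St) : ℕ :=
  match s.mode with
  | .chase => 0
  | .push => 2 * s.a + 2
  | .semi => 2 * s.a + 3

variable (pv : ℕ → V)

/-- main preservation lemma -/
lemma good_step
    (honP : ∀ u, onP u ↔ (d u ≤ k ∧ u = pv (d u)))
    (h0 : ∀ u, d u = 0 → onP u)
    {s : St} {u u' : V}
    (hG : Good d onP k s u)
    (hmv : u' = u ∨ d u' = d u + 1 ∨ d u = d u' + 1)
    (h1 : u' ≠ pv s.a) (h2 : u' ≠ pv s.b) :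
    Good d onP k (step d onP k s u') u' := by
  obtain ⟨mo, a, b⟩ := s
  obtain ⟨hak, hbk, hI⟩ := hG.1
  have hlock := hG.2
  dsimp only at hak hbk hI h1 h2
  cases mo with
  | chase =>
    obtain ⟨hnp, ha, hb⟩ := hlock rfl
    dsimp only at ha hb
    -- robber cannot step onto the path
    have hnp' : ¬ onP u' := by
      intro hp
      obtain ⟨hd'le, hu'⟩ := (honP u').mp hp
      rcases hmv with h | h | h
      · exact hnp (h ▸ hp)
      · apply h2; rw [hu']; congr 1; omega
      · apply h1; rw [hu']; congr 1; omega
    have hguard : ¬ (onP u' ∧ Nat.dist a (d u') ≤ 1 ∧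
        Nat.dist b (min (d u' + 1) k) ≤ 1) := fun h => hnp' h.1
    simp only [step, hguard, if_false]
    have hda : Nat.dist a (min (d u' - 1) k) ≤ 1 := by
      unfold Nat.dist; rcases hmv with rfl | h | h <;> omega
    have hdb : Nat.dist b (min (d u' + 1) k) ≤ 1 := by
      unfold Nat.dist; rcases hmv with rfl | h | h <;> omega
    refine ⟨⟨?_, ?_, trivial⟩, fun _ => ⟨hnp', ?_, ?_⟩⟩ <;>
      simp only [toward_close hda, toward_close hdb] <;> omega
  | push =>
    obtain ⟨hP, hda, hbm⟩ := hI
    have hu : u = pv (d u) := ((honP u).mp hP).2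
    have hne : u' ≠ u := by rw [hu, hda]; exact h1
    rcases hmv with h | h | h
    · exact absurd h hne
    · -- robber moved away from the path (upward)
      have hnp' : ¬ onP u' := by
        intro hp
        obtain ⟨hd'le, hu'⟩ := (honP u').mp hp
        apply h2; rw [hu']; congr 1; omega
      have hg1 : ¬ (onP u' ∧ d u' + 1 = a) := fun hh => hnp' hh.1
      have hg2 : ¬ (¬ onP u' ∧ d u' + 1 = a) := by intro hh; omega
      simp only [step, hg1, hg2, if_false]
      have hda' : Nat.dist a (min (d u' - 1) k) ≤ 1 := by unfold Nat.dist; omega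
      have hdb' : Nat.dist b (min (d u' + 1) k) ≤ 1 := by unfold Nat.dist; omega
      refine ⟨⟨?_, ?_, trivial⟩, fun _ => ⟨hnp', ?_, ?_⟩⟩ <;>
        simp only [toward_close hda', toward_close hdb'] <;> omega
    · -- robber moved downward; d u' + 1 = a
      have hd'a : d u' + 1 = a := by omega
      by_cases hp' : onP u'
      · have hd'k : d u' ≤ k := ((honP u').mp hp').1
        have hg1 : onP u' ∧ d u' + 1 = a := ⟨hp', hd'a⟩
        simp only [step, if_pos hg1]
        have hda' : Nat.dist a (d u') ≤ 1 := by unfold Nat.dist; omega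
        have hdb' : Nat.dist b (min (d u' + 1) k) ≤ 1 := by unfold Nat.dist; omega
        refine ⟨⟨?_, ?_, hp', ?_, ?_⟩, fun hc => by cases hc⟩ <;>
          simp only [toward_close hda', toward_close hdb'] <;> omega
      · have hg1 : ¬ (onP u' ∧ d u' + 1 = a) := fun hh => hp' hh.1
        have hg2 : (¬ onP u' ∧ d u' + 1 = a) := ⟨hp', hd'a⟩
        simp only [step, hg1, if_false, if_pos hg2]
        have hda' : Nat.dist a (d u') ≤ 1 := by unfold Nat.dist; omega
        have hdb' : Nat.dist b a ≤ 1 := by unfold Nat.dist; omega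
        refine ⟨⟨?_, ?_, hp', ?_, ?_⟩, fun hc => by cases hc⟩ <;>
          simp only [toward_close hda', toward_close hdb'] <;> omega
  | semi =>
    obtain ⟨hP, hda, hba⟩ := hI
    have ha1 : 1 ≤ a := by
      rcases Nat.eq_zero_or_pos a with h | h
      · exact absurd (h0 u (by omega)) hP
      · exact h
    rcases hmv with h | h | h
    · -- stay
      have hnp' : ¬ onP u' := h ▸ hP
      have hg1 : ¬ (onP u' ∧ d u' + 1 = a) := fun hh => hnp' hh.1
      have hg2 : (¬ onP u' ∧ (d u' = a ∨ d u' + 1 = a)) := ⟨hnp', Or.inl (by rw [h, hda])⟩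
      simp only [step, hg1, if_false, if_pos hg2]
      have hda' : Nat.dist a (d u') ≤ 1 := by unfold Nat.dist; omega
      have hdb' : Nat.dist b (d u' + 1) ≤ 1 := by unfold Nat.dist; omega
      refine ⟨⟨?_, ?_, hnp', ?_, ?_⟩, fun hc => by cases hc⟩ <;>
        simp only [toward_close hda', toward_close hdb'] <;> omega
    · -- moved up, off path
      have hnp' : ¬ onP u' := by
        intro hp
        obtain ⟨hd'le, hu'⟩ := (honP u').mp hp
        apply h2; rw [hu']; congr 1; omega
      have hg1 : ¬ (onP u' ∧ d u' + 1 = a) := fun hh => hnp' hh.1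
      have hg2 : ¬ (¬ onP u' ∧ (d u' = a ∨ d u' + 1 = a)) := by
        intro hh; rcases hh.2 with hh2 | hh2 <;> omega
      simp only [step, hg1, hg2, if_false]
      have hda' : Nat.dist a (min (d u' - 1) k) ≤ 1 := by unfold Nat.dist; omega
      have hdb' : Nat.dist b (min (d u' + 1) k) ≤ 1 := by unfold Nat.dist; omega
      refine ⟨⟨?_, ?_, trivial⟩, fun _ => ⟨hnp', ?_, ?_⟩⟩ <;>
        simp only [toward_close hda', toward_close hdb'] <;> omega
    · -- moved down : d u' + 1 = a
      have hd'a : d u' + 1 = a := by omega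
      by_cases hp' : onP u'
      · have hd'k : d u' ≤ k := ((honP u').mp hp').1
        have hg1 : onP u' ∧ d u' + 1 = a := ⟨hp', hd'a⟩
        simp only [step, if_pos hg1]
        have hda' : Nat.dist a (d u') ≤ 1 := by unfold Nat.dist; omega
        have hdb' : Nat.dist b (min (d u' + 1) k) ≤ 1 := by unfold Nat.dist; omega
        refine ⟨⟨?_, ?_, hp', ?_, ?_⟩, fun hc => by cases hc⟩ <;>
          simp only [toward_close hda', toward_close hdb'] <;> omega
      · have hg1 : ¬ (onP u' ∧ d u' + 1 = a) := fun hh => hp' hh.1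
        have hg2 : (¬ onP u' ∧ (d u' = a ∨ d u' + 1 = a)) := ⟨hp', Or.inr hd'a⟩
        simp only [step, hg1, if_false, if_pos hg2]
        have hda' : Nat.dist a (d u') ≤ 1 := by unfold Nat.dist; omega
        have hdb' : Nat.dist b (d u' + 1) ≤ 1 := by unfold Nat.dist; omega
        refine ⟨⟨?_, ?_, hp', ?_, ?_⟩, fun hc => by cases hc⟩ <;>
          simp only [toward_close hda', toward_close hdb'] <;> omega

/-- if the mode leaves `chase`, the new state is good -/
lemma entry_good
    (honP : ∀ u, onP u ↔ (d u ≤ k ∧ u = pv (d u)))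
    {s : St} {u' : V}
    (hs : s.mode = .chase) (hak : s.a ≤ k) (hbk : s.b ≤ k)
    (hns : (step d onP k s u').mode ≠ .chase) :
    Good d onP k (step d onP k s u') u' := by
  obtain ⟨mo, a, b⟩ := s
  cases mo with
  | chase =>
    dsimp only at hak hbk
    by_cases hg : onP u' ∧ Nat.dist a (d u') ≤ 1 ∧
        Nat.dist b (min (d u' + 1) k) ≤ 1
    · simp only [step, if_pos hg]
      obtain ⟨hp', hda, hdb⟩ := hg
      have hdk : d u' ≤ k := ((honP u').mp hp').1
      refine ⟨⟨?_, ?_, hp', ?_, ?_⟩, fun hc => by cases hc⟩ <;>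
        simp only [toward_close hda, toward_close hdb] <;> omega
    · exact absurd (by simp only [step, if_neg hg]) hns
  | push => cases hs
  | semi => cases hs

lemma good_onP_push {s : St} {u : V} (hG : Good d onP k s u) (hp : onP u) :
    s.mode = .push := by
  obtain ⟨mo, a, b⟩ := s
  cases mo with
  | chase => exact absurd hp (hG.2 rfl).1
  | push => rfl
  | semi => exact absurd hp hG.1.2.2.1

/-- measure does not increase from a good state -/
lemma mu_step_le
    (honP : ∀ u, onP u ↔ (d u ≤ k ∧ u = pv (d u)))
    {s : St} {u u' : V}
    (hG : Good d onP k s u)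
    (hmv : u' = u ∨ d u' = d u + 1 ∨ d u = d u' + 1)
    (h1 : u' ≠ pv s.a) (h2 : u' ≠ pv s.b) :
    mu (step d onP k s u') ≤ mu s := by
  obtain ⟨mo, a, b⟩ := s
  obtain ⟨hak, hbk, hI⟩ := hG.1
  have hlock := hG.2
  dsimp only at hak hbk hI h1 h2
  cases mo with
  | chase =>
    obtain ⟨hnp, ha, hb⟩ := hlock rfl
    dsimp only at ha hb
    have hnp' : ¬ onP u' := by
      intro hp
      obtain ⟨hd'le, hu'⟩ := (honP u').mp hp
      rcases hmv with rfl | h | h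
      · exact hnp hp
      · apply h2; rw [hu']; congr 1; omega
      · apply h1; rw [hu']; congr 1; omega
    have hguard : ¬ (onP u' ∧ Nat.dist a (d u') ≤ 1 ∧
        Nat.dist b (min (d u' + 1) k) ≤ 1) := fun h => hnp' h.1
    simp only [step, hguard, if_false, mu]
    exact le_refl _
  | push =>
    obtain ⟨hP, hda, hbm⟩ := hI
    simp only [step, mu]
    split_ifs with hg1 hg2
    · simp only [mu, toward_close (show Nat.dist a (d u') ≤ 1 by
        unfold Nat.dist; omega)]
      omega
    · simp only [mu, toward_close (show Nat.dist a (d u') ≤ 1 by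
        unfold Nat.dist; omega)]
      omega
    · simp only [mu]; omega
  | semi =>
    obtain ⟨hP, hda, hba⟩ := hI
    simp only [step, mu]
    split_ifs with hg1 hg2
    · simp only [mu, toward_close (show Nat.dist a (d u') ≤ 1 by
        unfold Nat.dist; omega)]
      omega
    · simp only [mu, toward_close (show Nat.dist a (d u') ≤ 1 by
        unfold Nat.dist; rcases hg2.2 with h | h <;> omega)]
      rcases hg2.2 with h | h <;> omega
    · simp only [mu]; omega

/-- measure strictly decreases out of a push state -/
lemma mu_push_strict {s : St} {u' : V} (hs : s.mode = .push) :
    mu (step d onP k s u') < mu s := by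
  obtain ⟨mo, a, b⟩ := s
  cases mo with
  | chase => cases hs
  | semi => cases hs
  | push =>
    simp only [step, mu]
    split_ifs with hg1 hg2
    · simp only [mu, toward_close (show Nat.dist a (d u') ≤ 1 by
        unfold Nat.dist; have := hg1.2; omega)]
      have := hg1.2; omega
    · simp only [mu, toward_close (show Nat.dist a (d u') ≤ 1 by
        unfold Nat.dist; have := hg2.2; omega)]
      have := hg2.2; omega
    · simp only [mu]; omega


lemma chase_formula {s : St} {u : V} (h1 : s.mode = .chase)
    (h2 : (step d onP k s u).mode = .chase) :
    step d onP k s u =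
      ⟨.chase, toward s.a (min (d u - 1) k), toward s.b (min (d u + 1) k)⟩ := by
  obtain ⟨mo, a, b⟩ := s
  cases mo with
  | push => cases h1
  | semi => cases h1
  | chase =>
    by_cases hg : onP u ∧ Nat.dist a (d u) ≤ 1 ∧ Nat.dist b (min (d u + 1) k) ≤ 1
    · have hcon : (step d onP k ⟨.chase, a, b⟩ u).mode = Mode.push := by
        simp only [step, if_pos hg]
      rw [hcon] at h2; cases h2
    · simp only [step, if_neg hg]

lemma step_a_dist (s : St) (u : V) : Nat.dist ((step d onP k s u).a) s.a ≤ 1 := by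
  unfold step; cases s.mode <;> dsimp only <;> split_ifs <;> apply toward_dist_self

lemma step_b_dist (s : St) (u : V) : Nat.dist ((step d onP k s u).b) s.b ≤ 1 := by
  unfold step; cases s.mode <;> dsimp only <;> split_ifs <;> apply toward_dist_self

end Machine

end SCRgeo


namespace SCRgeo3

variable {V : Type*} {G : SimpleGraph V} {v0 vk : V}

lemma walk_parity (C : G.Coloring (Fin 2)) :
    ∀ {x y : V} (w : G.Walk x y), (C x = C y ↔ Even w.length) := by
  intro x y w
  induction w with
  | nil => simp
  | @cons x' y' z' h q ih =>
    have hne : C x' ≠ C y' := C.valid h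
    have key : ∀ a b c : Fin 2, a ≠ b → ((a = c) ↔ ¬ (b = c)) := by decide
    rw [SimpleGraph.Walk.length_cons, Nat.even_add_one, ← ih, key _ _ _ hne]

lemma adj_dist_ne (hconn : G.Connected) (C : G.Coloring (Fin 2))
    {x y : V} (h : G.Adj x y) : G.dist v0 x ≠ G.dist v0 y := by
  intro heq
  obtain ⟨wx, hwx⟩ := (hconn v0 x).exists_walk_length_eq_dist
  obtain ⟨wy, hwy⟩ := (hconn v0 y).exists_walk_length_eq_dist
  have hx := walk_parity C wx
  have hy := walk_parity C wy
  rw [hwx] at hx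
  rw [hwy] at hy
  rw [heq] at hx
  have : C v0 = C x ↔ C v0 = C y := hx.trans hy.symm
  have hkey : ∀ a b c : Fin 2, ((a = b) ↔ (a = c)) → b = c := by decide
  exact C.valid h (hkey _ _ _ this)

lemma adj_dist_step (hconn : G.Connected) (C : G.Coloring (Fin 2))
    {x y : V} (h : G.Adj x y) :
    G.dist v0 y = G.dist v0 x + 1 ∨ G.dist v0 x = G.dist v0 y + 1 := by
  have h1 : G.dist v0 y ≤ G.dist v0 x + 1 := by
    have := hconn.dist_triangle (u := v0) (v := x) (w := y)
    have h2 : G.dist x y ≤ 1 := by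
      have := SimpleGraph.dist_le (SimpleGraph.Walk.cons h SimpleGraph.Walk.nil)
      simpa using this
    omega
  have h1' : G.dist v0 x ≤ G.dist v0 y + 1 := by
    have := hconn.dist_triangle (u := v0) (v := y) (w := x)
    have h2 : G.dist y x ≤ 1 := by
      have := SimpleGraph.dist_le (SimpleGraph.Walk.cons h.symm SimpleGraph.Walk.nil)
      simpa using this
    omega
  have := adj_dist_ne (v0 := v0) hconn C h
  omega

variable (p : G.Walk v0 vk)

lemma dist_getVert_le (hconn : G.Connected) : ∀ i, G.dist v0 (p.getVert i) ≤ i := by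
  intro i
  induction i with
  | zero => simp [SimpleGraph.Walk.getVert_zero]
  | succ n ihn =>
    rcases Nat.lt_or_ge n p.length with h | h
    · have hadj := p.adj_getVert_succ h
      have htr := hconn.dist_triangle (u := v0) (v := p.getVert n) (w := p.getVert (n + 1))
      have h2 : G.dist (p.getVert n) (p.getVert (n + 1)) ≤ 1 := by
        have := SimpleGraph.dist_le (SimpleGraph.Walk.cons hadj SimpleGraph.Walk.nil)
        simpa using this
      omega
    · have heq : p.getVert (n + 1) = p.getVert n := by
        rw [p.getVert_of_length_le h, p.getVert_of_length_le (by omega)]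
      rw [heq]
      exact le_trans ihn (by omega)

lemma dist_getVert_getVert (hconn : G.Connected) :
    ∀ m i, G.dist (p.getVert i) (p.getVert (i + m)) ≤ m := by
  intro m
  induction m with
  | zero => simp
  | succ n ihn =>
    intro i
    have htr := hconn.dist_triangle (u := p.getVert i) (v := p.getVert (i + n))
      (w := p.getVert (i + n + 1))
    have h2 : G.dist (p.getVert (i + n)) (p.getVert (i + n + 1)) ≤ 1 := by
      rcases Nat.lt_or_ge (i + n) p.length with h | h
      · have hadj := p.adj_getVert_succ h
        have := SimpleGraph.dist_le (SimpleGraph.Walk.cons hadj SimpleGraph.Walk.nil)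
        simpa using this
      · have heq : p.getVert (i + n + 1) = p.getVert (i + n) := by
          rw [p.getVert_of_length_le h, p.getVert_of_length_le (by omega)]
        rw [heq]
        simp [SimpleGraph.dist_self]
    have := ihn i
    have heq : i + (n + 1) = i + n + 1 := by omega
    rw [heq]
    omega

lemma dist_getVert (hconn : G.Connected) (hgeo : p.length = G.dist v0 vk) :
    ∀ i, i ≤ p.length → G.dist v0 (p.getVert i) = i := by
  intro i hi
  have hub := dist_getVert_le p hconn i
  have hlb : G.dist (p.getVert i) vk ≤ p.length - i := by
    have := dist_getVert_getVert p hconn (p.length - i) i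
    rwa [show i + (p.length - i) = p.length by omega, p.getVert_length] at this
  have htr := hconn.dist_triangle (u := v0) (v := p.getVert i) (w := vk)
  rw [← hgeo] at htr
  omega

end SCRgeo3


open SCRgeo SCRgeo3

/-- Let `G` be a finite connected bipartite simple graph and let
`P = (v_0, …, v_k)` be a geodesic path in `G`.  In the game of Surrounding Cops and
Robbers on `G`, two cops have a strategy such that, against every robber play,
after a finite number of moves the robber never again occupies a vertex of `P`. -/
theorem two_cops_guard_geodesic_bipartite {V : Type*} [Fintype V] (G : SimpleGraph V)
    (hconn : G.Connected) (hbip : G.Colorable 2)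
    {v0 vk : V} (p : G.Walk v0 vk) (hpath : p.IsPath)
    (hgeo : p.length = G.dist v0 vk) :
    ∃ F : List V → Fin 2 → V, ValidCopStrategy G F ∧
      ∀ r : ℕ → V, LegalPlay G F r →
        ∃ T : ℕ, ∀ t, T ≤ t → r t ∉ p.support := by
  classical
  obtain ⟨C⟩ := hbip
  set k := p.length with hk
  set d : V → ℕ := fun u => G.dist v0 u with hd
  set pv : ℕ → V := fun i => p.getVert i with hpv
  set onP : V → Prop := fun u => d u ≤ k ∧ u = pv (d u) with honPdef
  have honP : ∀ u, onP u ↔ (d u ≤ k ∧ u = pv (d u)) := fun u => Iff.rfl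
  have hpvd : ∀ i, i ≤ k → d (pv i) = i := dist_getVert p hconn hgeo
  have h0 : ∀ u, d u = 0 → onP u := by
    intro u h
    have huv : v0 = u := (hconn.dist_eq_zero_iff).mp h
    subst huv
    refine ⟨by omega, ?_⟩
    rw [h]
    exact (p.getVert_zero).symm
  have hadj : ∀ u u' : V, G.Adj u u' → d u' = d u + 1 ∨ d u = d u' + 1 :=
    fun u u' h => adj_dist_step hconn C h
  have hmv : ∀ u u' : V, stepRel G u u' → (u' = u ∨ d u' = d u + 1 ∨ d u = d u' + 1) := by
    rintro u u' (rfl | h)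
    · exact Or.inl rfl
    · exact Or.inr (hadj u u' h)
  have hsupp : ∀ u, u ∈ p.support ↔ onP u := by
    intro u
    rw [SimpleGraph.Walk.mem_support_iff_exists_getVert]
    constructor
    · rintro ⟨n, hgv, hn⟩
      have hdu : d u = n := by rw [← hgv]; exact hpvd n hn
      exact ⟨by omega, by rw [hdu]; exact hgv.symm⟩
    · rintro ⟨h1, h2⟩
      exact ⟨d u, h2.symm, h1⟩
  have hpvstep : ∀ m n : ℕ, Nat.dist m n ≤ 1 → stepRel G (pv m) (pv n) := by
    intro m n hmn
    rcases Nat.lt_trichotomy m n with h | h | h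
    · have hn : n = m + 1 := by unfold Nat.dist at hmn; omega
      subst hn
      rcases Nat.lt_or_ge m k with hm | hm
      · exact Or.inr (p.adj_getVert_succ hm)
      · left
        show p.getVert m = p.getVert (m + 1)
        rw [p.getVert_of_length_le hm, p.getVert_of_length_le (by omega)]
    · exact Or.inl (by rw [h])
    · have hn : m = n + 1 := by unfold Nat.dist at hmn; omega
      subst hn
      rcases Nat.lt_or_ge n k with hm | hm
      · exact Or.inr (p.adj_getVert_succ hm).symm
      · left
        show p.getVert (n + 1) = p.getVert n
        rw [p.getVert_of_length_le hm, p.getVert_of_length_le (by omega)]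
  set s0 : St := ⟨.chase, 0, 0⟩ with hs0
  set F : List V → Fin 2 → V := fun h i =>
    if i = 0 then pv ((h.foldl (step d onP k) s0).a)
    else pv ((h.foldl (step d onP k) s0).b) with hF
  refine ⟨F, ?_, ?_⟩
  · -- validity of the strategy
    intro h x i
    have hfold : (h ++ [x]).foldl (step d onP k) s0 =
        step d onP k (h.foldl (step d onP k) s0) x := by
      rw [List.foldl_append]
      rfl
    by_cases hi : i = 0
    · have e1 : F h i = pv ((h.foldl (step d onP k) s0).a) := by
        rw [hF]; simp [hi]
      have e2 : F (h ++ [x]) i =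
          pv ((step d onP k (h.foldl (step d onP k) s0) x).a) := by
        rw [hF]; simp [hi, hfold]
      rw [e1, e2]
      exact hpvstep _ _ (by rw [Nat.dist_comm]; exact step_a_dist d onP k _ x)
    · have e1 : F h i = pv ((h.foldl (step d onP k) s0).b) := by
        rw [hF]; simp [hi]
      have e2 : F (h ++ [x]) i =
          pv ((step d onP k (h.foldl (step d onP k) s0) x).b) := by
        rw [hF]; simp [hi, hfold]
      rw [e1, e2]
      exact hpvstep _ _ (by rw [Nat.dist_comm]; exact step_b_dist d onP k _ x)
  · -- the winning property
    intro r hr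
    obtain ⟨hstepr, hnotcop⟩ := hr
    set S : ℕ → St := fun t => (histList r t).foldl (step d onP k) s0 with hS
    have hSsucc : ∀ t, S (t + 1) = step d onP k (S t) (r t) := by
      intro t
      show (histList r (t + 1)).foldl (step d onP k) s0 = _
      rw [histList, List.range_succ, List.map_append, List.foldl_append]
      rfl
    have hleg : ∀ t, r t ≠ pv ((S t).a) ∧ r t ≠ pv ((S t).b) := by
      intro t
      constructor
      · have h1 := hnotcop t 0
        rw [hF] at h1
        simp only [if_pos rfl] at h1
        exact h1.symm
      · have h1 := hnotcop t 1
        rw [hF] at h1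
        simp only [show (1 : Fin 2) ≠ 0 by decide, if_false, if_neg] at h1
        exact h1.symm
    have hmvt : ∀ t, r (t + 1) = r t ∨ d (r (t + 1)) = d (r t) + 1 ∨
        d (r t) = d (r (t + 1)) + 1 := fun t => hmv _ _ (hstepr t)
    set GD : ℕ → Prop := fun t => Good d onP k (S (t + 1)) (r t) with hGDdef
    have hGDstep : ∀ t, GD t → GD (t + 1) := by
      intro t h
      show Good d onP k (S (t + 2)) (r (t + 1))
      rw [hSsucc (t + 1)]
      exact good_step d onP k pv honP h0 h (hmvt t) (hleg (t + 1)).1 (hleg (t + 1)).2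
    have hmain : ∃ T1, GD T1 := by
      by_cases hch : ∀ t, (S t).mode = Mode.chase
      · -- the cops chase forever; they eventually lock onto the shadow
        have hform : ∀ t, S (t + 1) = ⟨.chase, toward (S t).a (min (d (r t) - 1) k),
            toward (S t).b (min (d (r t) + 1) k)⟩ := by
          intro t
          rw [hSsucc t]
          exact chase_formula d onP k (hch t) (by rw [← hSsucc t]; exact hch (t + 1))
        have hbnd : ∀ t, (S t).a ≤ k ∧ (S t).b ≤ k := by
          intro t
          induction t with
          | zero => exact ⟨Nat.zero_le k, Nat.zero_le k⟩
          | succ n ihn =>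
            rw [hform n]
            exact ⟨toward_le ihn.1 (Nat.min_le_right _ _),
              toward_le ihn.2 (Nat.min_le_right _ _)⟩
        set Ta : ℕ → ℕ := fun t => min (d (r (t - 1)) - 1) k with hTa
        set Tb : ℕ → ℕ := fun t => min (d (r (t - 1)) + 1) k with hTb
        have hlipa : ∀ t, Nat.dist (Ta (t + 1)) (Ta t) ≤ 1 := by
          intro t
          cases t with
          | zero => simp [hTa, Nat.dist_self]
          | succ n =>
            have hmm := hmvt n
            simp only [hTa, Nat.add_sub_cancel, Nat.succ_sub_one]
            unfold Nat.dist
            rcases hmm with h | h | h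
            · rw [h]; omega
            · omega
            · omega
        have hlipb : ∀ t, Nat.dist (Tb (t + 1)) (Tb t) ≤ 1 := by
          intro t
          cases t with
          | zero => simp [hTb, Nat.dist_self]
          | succ n =>
            have hmm := hmvt n
            simp only [hTb, Nat.add_sub_cancel, Nat.succ_sub_one]
            unfold Nat.dist
            rcases hmm with h | h | h
            · rw [h]; omega
            · omega
            · omega
        obtain ⟨Na, hNa⟩ := reach_lock k (fun t => (S t).a) Ta
          (by intro t
              show (S (t + 1)).a = toward ((S t).a) (Ta (t + 1))
              rw [hform t, hTa]
              simp)
          hlipa (fun t => Nat.min_le_right _ _) (fun t => (hbnd t).1)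
        obtain ⟨Nb, hNb⟩ := reach_lock k (fun t => (S t).b) Tb
          (by intro t
              show (S (t + 1)).b = toward ((S t).b) (Tb (t + 1))
              rw [hform t, hTb]
              simp)
          hlipb (fun t => Nat.min_le_right _ _) (fun t => (hbnd t).2)
        have hGDoff : ∀ t, Na ≤ t + 1 → Nb ≤ t + 1 → ¬ onP (r t) → GD t := by
          intro t h1 h2 hnp
          have ea := hNa (t + 1) h1
          have eb := hNb (t + 1) h2
          simp only [hTa, Nat.add_sub_cancel] at ea
          simp only [hTb, Nat.add_sub_cancel] at eb
          show Good d onP k (S (t + 1)) (r t)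
          refine ⟨?_, fun _ => ⟨hnp, ea, eb⟩⟩
          have hbt := hbnd (t + 1)
          have hmode := hch (t + 1)
          refine ⟨hbt.1, hbt.2, ?_⟩
          rw [hmode]
          trivial
        set t0 := max Na Nb with ht0
        by_cases hon : onP (r t0)
        · -- the robber sits on the path while the cops are locked
          have ea := hNa (t0 + 1) (by omega)
          have eb := hNb (t0 + 1) (by omega)
          simp only [hTa, Nat.add_sub_cancel] at ea
          simp only [hTb, Nat.add_sub_cancel] at eb
          obtain ⟨hjk, hju⟩ := hon
          rcases hmvt t0 with h | h | h
          · -- the robber stays: the push guard fires, contradiction with hch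
            exfalso
            have hmode := hch (t0 + 2)
            rw [hSsucc (t0 + 1)] at hmode
            have hg : onP (r (t0 + 1)) ∧
                Nat.dist ((S (t0 + 1)).a) (d (r (t0 + 1))) ≤ 1 ∧
                Nat.dist ((S (t0 + 1)).b) (min (d (r (t0 + 1)) + 1) k) ≤ 1 := by
              rw [h]
              refine ⟨⟨hjk, hju⟩, ?_, ?_⟩
              · rw [ea]; unfold Nat.dist; omega
              · rw [eb]; unfold Nat.dist; omega
            have hmch := hch (t0 + 1)
            revert hmode hg hmch
            obtain ⟨mo, a, b⟩ := S (t0 + 1)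
            intro hmode hg hmch
            dsimp only at hmch
            subst hmch
            rw [show step d onP k ⟨Mode.chase, a, b⟩ (r (t0 + 1)) =
                ⟨Mode.push, toward a (d (r (t0 + 1))),
                  toward b (min (d (r (t0 + 1)) + 1) k)⟩ from by
              simp only [step, if_pos hg]] at hmode
            cases hmode
          · -- the robber moved up: it cannot land on the path
            have hnp' : ¬ onP (r (t0 + 1)) := by
              intro hp
              obtain ⟨h1, h2⟩ := hp
              apply (hleg (t0 + 1)).2
              rw [h2, eb]
              congr 1
              omega
            exact ⟨t0 + 1, hGDoff (t0 + 1) (by omega) (by omega) hnp'⟩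
          · -- the robber moved down: it cannot land on the path
            have hnp' : ¬ onP (r (t0 + 1)) := by
              intro hp
              obtain ⟨h1, h2⟩ := hp
              apply (hleg (t0 + 1)).1
              rw [h2, ea]
              congr 1
              omega
            exact ⟨t0 + 1, hGDoff (t0 + 1) (by omega) (by omega) hnp'⟩
        · exact ⟨t0, hGDoff t0 (by omega) (by omega) hon⟩
      · -- the mode leaves chase at some first time; the resulting state is good
        push_neg at hch
        have hex : ∃ t, (S t).mode ≠ Mode.chase := hch
        have h0m : (S 0).mode = Mode.chase := rfl
        have hspec : (S (Nat.find hex)).mode ≠ Mode.chase := Nat.find_spec hex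
        have hmin : ∀ s, s < Nat.find hex → (S s).mode = Mode.chase := by
          intro s hs
          have := Nat.find_min hex hs
          push_neg at this
          exact this
        have htf0 : Nat.find hex ≠ 0 := fun hzero => hspec (by rw [hzero]; exact h0m)
        obtain ⟨t', ht'⟩ : ∃ t', Nat.find hex = t' + 1 := ⟨Nat.find hex - 1, by omega⟩
        rw [ht'] at hspec
        have hmin' : ∀ s, s ≤ t' → (S s).mode = Mode.chase := fun s hs =>
          hmin s (by omega)
        have hbnd' : ∀ s, s ≤ t' → (S s).a ≤ k ∧ (S s).b ≤ k := by
          intro s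
          induction s with
          | zero => intro _; exact ⟨Nat.zero_le k, Nat.zero_le k⟩
          | succ n ihn =>
            intro hs
            have h1 : (S n).mode = Mode.chase := hmin' n (by omega)
            have h2 : (step d onP k (S n) (r n)).mode = Mode.chase := by
              rw [← hSsucc n]; exact hmin' (n + 1) hs
            have hcf := chase_formula d onP k h1 h2
            rw [hSsucc n, hcf]
            have hb := ihn (by omega)
            exact ⟨toward_le hb.1 (Nat.min_le_right _ _),
              toward_le hb.2 (Nat.min_le_right _ _)⟩
        refine ⟨t', ?_⟩
        show Good d onP k (S (t' + 1)) (r t')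
        rw [hSsucc t']
        exact entry_good d onP k pv honP (hmin' t' le_rfl) (hbnd' t' le_rfl).1
          (hbnd' t' le_rfl).2 (by rw [← hSsucc t']; exact hspec)
    -- phase 2: the measure argument
    obtain ⟨T1, hT1⟩ := hmain
    have hGDall : ∀ t, T1 ≤ t → GD t := by
      intro t ht
      induction t, ht using Nat.le_induction with
      | base => exact hT1
      | succ n hn ihn => exact hGDstep n ihn
    set f : ℕ → ℕ := fun n => mu (S (T1 + 1 + n)) with hf
    have hdec : ∀ n, f (n + 1) ≤ f n := by
      intro n
      show mu (S (T1 + 1 + (n + 1))) ≤ mu (S (T1 + 1 + n))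
      have heq : T1 + 1 + (n + 1) = (T1 + n + 1) + 1 := by omega
      have heq2 : T1 + 1 + n = T1 + n + 1 := by omega
      rw [heq, heq2, hSsucc (T1 + n + 1)]
      exact mu_step_le d onP k pv honP (hGDall (T1 + n) (by omega)) (hmvt (T1 + n))
        (hleg (T1 + n + 1)).1 (hleg (T1 + n + 1)).2
    obtain ⟨M, hM⟩ := exists_stable f hdec
    refine ⟨T1 + M + 1, fun t ht => ?_⟩
    intro hmem
    have hon : onP (r t) := (hsupp (r t)).mp hmem
    have hgd : Good d onP k (S (t + 1)) (r t) := hGDall t (by omega)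
    have hpush : (S (t + 1)).mode = Mode.push := good_onP_push d onP k hgd hon
    have hstrict : mu (S (t + 2)) < mu (S (t + 1)) := by
      rw [hSsucc (t + 1)]
      exact mu_push_strict d onP k hpush
    have e1 := hM (t - T1) (by omega)
    have e2 := hM (t + 1 - T1) (by omega)
    have q1 : T1 + 1 + (t - T1) = t + 1 := by omega
    have q2 : T1 + 1 + (t + 1 - T1) = t + 2 := by omega
    simp only [hf, q1, q2] at e1 e2
    omega
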